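/- Let x ∈ 𝒦_N, v ∈ ℝ^{N+1}, and set μ^N := Σ_{i=0}^{N-1} R_i^N(x) 𝟙_{[x_i,x_{i+1})} ℒ¹ and ν^N := Σ_{i=0}^{N-1} v_i R_i^N(x) 𝟙_{[x_i,x_{i+1})} ℒ¹. Then the continuous action is controlled by the discrete one: Φ_{p,m}(μ^N, ν^N) ≤ ((N+1)/N) Φ^N_{p,m}(x, v). -/

import Mathlib

open Set MeasureTheory Filter
open scoped ENNReal NNReal Topology

/-- The cone `𝒦_N` of `N+1` ordered particles with consecutive gaps at least `1/(N M)`. -/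
def InCone (N : ℕ) (M : ℝ) (x : Fin (N+1) → ℝ) : Prop :=
  ∀ i : Fin N, x i.castSucc + 1 / (N * M) ≤ x i.succ

/-- Reconstructed densities (for indices `i < N`). -/
noncomputable def Rrec (N : ℕ) (x : Fin (N+1) → ℝ) (i : Fin N) : ℝ :=
  1 / (N * (x i.succ - x i.castSucc))

/-- The action density `φ_{p,m}(ρ,j) = |j|^p / m(ρ)^{p-1}` (zero where `m(ρ) ≤ 0`). -/
noncomputable def actionDensity (p : ℝ) (m : ℝ → ℝ) (ρ j : ℝ) : ℝ :=
  if 0 < m ρ then |j| ^ p / (m ρ) ^ (p - 1) else 0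

/-- The piecewise-constant density associated to `x` with values `R_i^N(x)`,
weighted pointwise by `w i`. -/
noncomputable def pcFun (N : ℕ) (x : Fin (N+1) → ℝ) (w : Fin N → ℝ) (yy : ℝ) : ℝ :=
  ∑ i : Fin N, Set.indicator (Ico (x i.castSucc) (x i.succ))
    (fun _ => w i * Rrec N x i) yy

/-- The discrete action `Φ^N_{p,m}(x,v)`, with `R_N^N(x) = ρ*(x)`. -/
noncomputable def PhiN (p : ℝ) (m : ℝ → ℝ) (N : ℕ) (ρstar : (Fin (N+1) → ℝ) → ℝ)
    (x v : Fin (N+1) → ℝ) : ℝ :=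
  (1 / (N + 1 : ℝ)) *
    ((∑ i : Fin N, |v i.castSucc| ^ p / (m (Rrec N x i) / Rrec N x i) ^ (p - 1))
      + |v (Fin.last N)| ^ p / (m (ρstar x) / ρstar x) ^ (p - 1))

/-- the continuous action of the piecewise-constant density/momentum pair
associated to `(x,v)` is controlled by the discrete action:
`Φ_{p,m}(μ^N, ν^N) ≤ (N+1)/N · Φ^N_{p,m}(x,v)`. -/
theorem continuous_action_le_discrete (N : ℕ) (hN : 1 ≤ N) (M p : ℝ)
    (hM : 0 < M) (hp : 1 < p)
    (m : ℝ → ℝ) (hconc : ConcaveOn ℝ (Icc 0 M) m) (hm0 : m 0 = 0)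
    (hmnn : ∀ ρ ∈ Icc (0:ℝ) M, 0 ≤ m ρ)
    (ρstar : (Fin (N+1) → ℝ) → ℝ) (hρ : ∀ w, 0 ≤ ρstar w ∧ ρstar w ≤ M)
    (x v : Fin (N+1) → ℝ) (hx : InCone N M x) :
    (∫ yy : ℝ, actionDensity p m (pcFun N x (fun _ => 1) yy)
        (pcFun N x (fun i => v i.castSucc) yy))
      ≤ ((N + 1 : ℝ) / N) * PhiN p m N ρstar x v := by
  classical
  have hNpos : (0:ℝ) < N := by
    have : (1:ℝ) ≤ N := by exact_mod_cast hN
    linarith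
  have hNM : (0:ℝ) < 1/(N*M) := by positivity
  have hlt : ∀ i : Fin N, x i.castSucc < x i.succ := fun i => by
    have := hx i; linarith
  have hmono : StrictMono x := Fin.strictMono_iff_lt_succ.2 hlt
  have hℓpos : ∀ i : Fin N, 0 < x i.succ - x i.castSucc := fun i => by
    have := hlt i; linarith
  have hRpos : ∀ i : Fin N, 0 < Rrec N x i := fun i => by
    have := hℓpos i; unfold Rrec; positivity
  have hRM : ∀ i : Fin N, Rrec N x i ≤ M := fun i => by
    have h1 : 1/(N*M) ≤ x i.succ - x i.castSucc := by have := hx i; linarith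
    unfold Rrec
    rw [div_le_iff₀ (by have := hℓpos i; positivity)]
    have : (N:ℝ) * (1/(N*M)) ≤ N * (x i.succ - x i.castSucc) := by
      exact mul_le_mul_of_nonneg_left h1 (le_of_lt hNpos)
    have h2 : (N:ℝ) * (1/(N*M)) = 1/M := by field_simp
    have h3 : 1/M ≤ (N:ℝ)*(x i.succ - x i.castSucc) := by rw [← h2]; exact this
    have h4 : M * (1/M) ≤ M * ((N:ℝ)*(x i.succ - x i.castSucc)) :=
      mul_le_mul_of_nonneg_left h3 hM.le
    have h5 : M * (1/M) = 1 := by field_simp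
    linarith
  have hℓeq : ∀ i : Fin N, x i.succ - x i.castSucc = 1/(N * Rrec N x i) := fun i => by
    unfold Rrec
    field_simp
  -- disjointness
  have hdis : ∀ (k i : Fin N), i ≠ k → ∀ yy ∈ Ico (x k.castSucc) (x k.succ),
      yy ∉ Ico (x i.castSucc) (x i.succ) := by
    intro k i hik yy hyy hmem
    rcases lt_or_gt_of_ne hik with h | h
    · -- i < k : x i.succ ≤ x k.castSucc
      have hle : (i.succ : Fin (N+1)) ≤ k.castSucc := by
        simp [Fin.le_def]
        omega
      have := hmono.monotone hle
      exact absurd hmem.2 (not_lt.2 (le_trans this hyy.1))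
    · -- k < i : x k.succ ≤ x i.castSucc
      have hle : (k.succ : Fin (N+1)) ≤ i.castSucc := by
        simp [Fin.le_def]
        omega
      have := hmono.monotone hle
      exact absurd hyy.2 (not_lt.2 (le_trans this hmem.1))
  -- evaluation of pcFun
  have hpc : ∀ (w : Fin N → ℝ) (k : Fin N) (yy : ℝ),
      yy ∈ Ico (x k.castSucc) (x k.succ) → pcFun N x w yy = w k * Rrec N x k := by
    intro w k yy hyy
    unfold pcFun
    rw [Finset.sum_eq_single k]
    · rw [Set.indicator_of_mem hyy]
    · intro i _ hik
      exact Set.indicator_of_notMem (hdis k i hik yy hyy) _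
    · intro h; exact absurd (Finset.mem_univ k) h
  have hpc0 : ∀ (w : Fin N → ℝ) (yy : ℝ),
      (∀ k : Fin N, yy ∉ Ico (x k.castSucc) (x k.succ)) → pcFun N x w yy = 0 := by
    intro w yy h
    unfold pcFun
    exact Finset.sum_eq_zero fun i _ => Set.indicator_of_notMem (h i) _
  set c : Fin N → ℝ :=
    fun i => actionDensity p m (Rrec N x i) (v i.castSucc * Rrec N x i) with hc
  have hfun : ∀ yy : ℝ,
      actionDensity p m (pcFun N x (fun _ => 1) yy) (pcFun N x (fun i => v i.castSucc) yy)
        = ∑ i : Fin N, Set.indicator (Ico (x i.castSucc) (x i.succ)) (fun _ => c i) yy := by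
    intro yy
    by_cases h : ∃ k : Fin N, yy ∈ Ico (x k.castSucc) (x k.succ)
    · obtain ⟨k, hk⟩ := h
      rw [hpc _ k yy hk, hpc _ k yy hk, one_mul]
      rw [Finset.sum_eq_single k]
      · rw [Set.indicator_of_mem hk]
      · intro i _ hik
        exact Set.indicator_of_notMem (hdis k i hik yy hk) _
      · intro h; exact absurd (Finset.mem_univ k) h
    · push_neg at h
      rw [hpc0 _ _ h, hpc0 _ _ h]
      have h0 : actionDensity p m 0 0 = 0 := by simp [actionDensity, hm0]
      rw [h0]
      exact (Finset.sum_eq_zero fun i _ => Set.indicator_of_notMem (h i) _).symm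
  have hintg : ∀ i : Fin N,
      Integrable (Set.indicator (Ico (x i.castSucc) (x i.succ)) (fun _ => c i))
        (volume : Measure ℝ) := by
    intro i
    refine (integrable_indicator_iff measurableSet_Ico).2 ?_
    exact integrableOn_const measure_Ico_lt_top.ne
  have hint : (∫ yy : ℝ, actionDensity p m (pcFun N x (fun _ => 1) yy)
        (pcFun N x (fun i => v i.castSucc) yy))
      = ∑ i : Fin N, (x i.succ - x i.castSucc) * c i := by
    simp only [hfun]
    rw [integral_finset_sum _ (fun i _ => hintg i)]
    refine Finset.sum_congr rfl fun i _ => ?_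
    rw [integral_indicator_const _ measurableSet_Ico]
    rw [measureReal_def, Real.volume_Ico, ENNReal.toReal_ofReal (le_of_lt (hℓpos i))]
    rw [smul_eq_mul]
  -- per-term computation
  set t : Fin N → ℝ :=
    fun i => |v i.castSucc| ^ p / (m (Rrec N x i) / Rrec N x i) ^ (p - 1) with ht
  have hterm : ∀ i : Fin N, (x i.succ - x i.castSucc) * c i = (1/N) * t i := by
    intro i
    set R := Rrec N x i with hR
    have hRp : 0 < R := hRpos i
    have hmR : 0 ≤ m R := hmnn R ⟨le_of_lt hRp, hRM i⟩
    rw [hℓeq i, hc, ht]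
    by_cases hmpos : 0 < m R
    · simp only [actionDensity, if_pos hmpos]
      have h1 : |v i.castSucc * R| ^ p = |v i.castSucc| ^ p * R ^ p := by
        rw [abs_mul, abs_of_pos hRp, Real.mul_rpow (abs_nonneg _) (le_of_lt hRp)]
      have h2 : (m R / R) ^ (p - 1) = (m R) ^ (p - 1) / R ^ (p - 1) := by
        rw [Real.div_rpow hmR (le_of_lt hRp)]
      have h3 : R ^ (p - 1) = R ^ p / R := by
        rw [Real.rpow_sub hRp, Real.rpow_one]
      have hmRne : (m R) ^ (p - 1) ≠ 0 := ne_of_gt (Real.rpow_pos_of_pos hmpos _)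
      have hRpne : R ^ p ≠ 0 := ne_of_gt (Real.rpow_pos_of_pos hRp _)
      rw [h1, h2, h3]
      simp only [← hR, if_pos hmpos]
      field_simp
    · simp only [actionDensity, if_neg hmpos]
      have hm0' : m R = 0 := le_antisymm (not_lt.1 hmpos) hmR
      simp only [← hR, hm0', lt_irrefl, if_false]
      rw [zero_div, Real.zero_rpow (by linarith : p - 1 ≠ 0), div_zero,
        mul_zero, mul_zero]
  -- last term nonneg
  have hlast : 0 ≤ |v (Fin.last N)| ^ p / (m (ρstar x) / ρstar x) ^ (p - 1) := by
    have hnum : 0 ≤ |v (Fin.last N)| ^ p := Real.rpow_nonneg (abs_nonneg _) _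
    have hratio : 0 ≤ m (ρstar x) / ρstar x := by
      rcases eq_or_lt_of_le (hρ x).1 with h | h
      · rw [← h, div_zero]
      · exact div_nonneg (hmnn _ ⟨le_of_lt h, (hρ x).2⟩) (le_of_lt h)
    exact div_nonneg hnum (Real.rpow_nonneg hratio _)
  -- conclude
  rw [hint]
  have hsum : ∑ i : Fin N, (x i.succ - x i.castSucc) * c i = (1/N) * ∑ i : Fin N, t i := by
    rw [Finset.mul_sum]
    exact Finset.sum_congr rfl fun i _ => hterm i
  rw [hsum]
  unfold PhiN
  have hN1 : (0:ℝ) < (N:ℝ) + 1 := by linarith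
  have hrhs : ((N + 1 : ℝ) / N) * ((1 / (N + 1 : ℝ)) *
      ((∑ i : Fin N, t i) + |v (Fin.last N)| ^ p / (m (ρstar x) / ρstar x) ^ (p - 1)))
      = (1/N) * ((∑ i : Fin N, t i) + |v (Fin.last N)| ^ p / (m (ρstar x) / ρstar x) ^ (p - 1)) := by
    field_simp
  rw [ht] at hrhs
  rw [hrhs]
  have : (0:ℝ) < 1/N := by positivity
  nlinarith [hlast]
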